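/- If a part of λ is repeated, λ_i = λ_{i+1} = ⋯ = λ_j, then in every admissible state of the colored model the colored lines entering through the top in the corresponding consecutive columns must pairwise cross; consequently, if the ensemble S_{z,λ,w} is nonempty then w is the shortest element of its coset wW_λ in W/W_λ, where W_λ is the stabilizer of λ. -/

import Mathlib

abbrev LP (r : ℕ) := AddMonoidAlgebra ℚ (Fin r → ℤ)

noncomputable def mono {r : ℕ} (μ : Fin r → ℤ) : LP r :=
  AddMonoidAlgebra.ofCoeff (Finsupp.single μ (1 : ℚ))

/-- The simple reflection `s_i` of `S_r`, swapping `i` and `i+1` (0-based). -/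
def sPerm (r i : ℕ) : Equiv.Perm (Fin r) :=
  if h : i + 1 < r then Equiv.swap ⟨i, Nat.lt_of_succ_lt h⟩ ⟨i + 1, h⟩ else 1

/-- The simple root `α_i = e_i - e_{i+1}`. -/
def alph (r i : ℕ) : Fin r → ℤ :=
  if h : i + 1 < r then Pi.single ⟨i, Nat.lt_of_succ_lt h⟩ 1 - Pi.single ⟨i + 1, h⟩ 1 else 0

/-- The pairing `⟨μ, α_i^∨⟩ = μ_i - μ_{i+1}`. -/
def pair (r i : ℕ) (μ : Fin r → ℤ) : ℤ :=
  if h : i + 1 < r then μ ⟨i, Nat.lt_of_succ_lt h⟩ - μ ⟨i + 1, h⟩ else 0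

/-- The isobaric Demazure operator `∂_i` on the monomial `z^μ`, given by the standard
explicit formula equivalent to `∂_i f(z) = (f(z) - z^{-α_i} f(s_i z))/(1 - z^{-α_i})`. -/
noncomputable def demMono (r i : ℕ) (μ : Fin r → ℤ) : LP r :=
  if 0 ≤ pair r i μ then ∑ t ∈ Finset.range ((pair r i μ).toNat + 1), mono (μ - t • alph r i)
  else if pair r i μ = -1 then 0
  else -∑ t ∈ Finset.range ((-pair r i μ).toNat - 1), mono (μ + (t + 1) • alph r i)

/-- The isobaric Demazure operator `∂_i` on Laurent polynomials, extended linearly. -/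
noncomputable def dem (r i : ℕ) (f : LP r) : LP r :=
  Finsupp.sum f.coeff fun μ c => c • demMono r i μ

/-- The modified Demazure operator `∂°_i = ∂_i - 1`. -/
noncomputable def demC (r i : ℕ) (f : LP r) : LP r := dem r i f - f

/-- The action of `s_i` on Laurent polynomials: `(s_i f)(z) = f(s_i z)`. -/
noncomputable def sAct (r i : ℕ) (f : LP r) : LP r :=
  AddMonoidAlgebra.ofCoeff (Finsupp.mapDomain (fun μ => μ ∘ (sPerm r i)) f.coeff)

/-- `∂_w = ∂_{i_1} ⋯ ∂_{i_k}` along a word `(i_1, …, i_k)`. -/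
noncomputable def demWord (r : ℕ) : List ℕ → LP r → LP r
  | [], f => f
  | i :: l, f => dem r i (demWord r l f)

/-- `∂°_w = ∂°_{i_1} ⋯ ∂°_{i_k}` along a word `(i_1, …, i_k)`. -/
noncomputable def demCWord (r : ℕ) : List ℕ → LP r → LP r
  | [], f => f
  | i :: l, f => demC r i (demCWord r l f)

/-- All letters of the word are valid indices of simple reflections of `S_r`. -/
def OKWord (r : ℕ) (l : List ℕ) : Prop := ∀ i ∈ l, i + 1 < r

def wordProd (r : ℕ) (l : List ℕ) : Equiv.Perm (Fin r) := (l.map (sPerm r)).prod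

/-- Coxeter length of a permutation. -/
noncomputable def len (r : ℕ) (w : Equiv.Perm (Fin r)) : ℕ :=
  sInf {n | ∃ l : List ℕ, OKWord r l ∧ wordProd r l = w ∧ l.length = n}

/-- `l` is a reduced word. -/
def Reduced (r : ℕ) (l : List ℕ) : Prop :=
  OKWord r l ∧ l.length = len r (wordProd r l)

/-- Bruhat order on `S_r`, via the subword characterization. -/
def bruhatLE (r : ℕ) (y w : Equiv.Perm (Fin r)) : Prop :=
  ∃ l : List ℕ, Reduced r l ∧ wordProd r l = w ∧
    ∃ l' : List ℕ, l'.Sublist l ∧ wordProd r l' = y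

/-- The Young diagram of a partition `λ` with at most `r` parts. -/
noncomputable def lamDiag {r : ℕ} (lam : Fin r → ℕ)
    (h : (List.ofFn lam).Pairwise (· ≥ ·)) : YoungDiagram :=
  YoungDiagram.ofRowLens (List.ofFn lam) (List.sortedGE_iff_pairwise.mpr h)

/-- The number of entries `< m` in row `j` of the tableau `T`; since rows weakly
increase, this is the length of row `j` of the tableau obtained from `T` by deleting
all entries `≥ m`. -/
def cntLt {μ : YoungDiagram} (T : SemistandardYoungTableau μ) (j m : ℕ) : ℕ :=
  ((Finset.range (μ.rowLen j)).filter (fun k => T j k < m)).card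

/-- The weight of a tableau: `wtT T m` is the number of entries equal to `m`.
(Entries are 0-based: the letter `m ∈ {0, …, r-1}` corresponds to `m+1 ∈ {1, …, r}`.) -/
def wtT {μ : YoungDiagram} (T : SemistandardYoungTableau μ) (m : ℕ) : ℕ :=
  (μ.cells.filter (fun c => T c.1 c.2 = m)).card

/-- A Gelfand-Tsetlin pattern with `r` rows and top row `λ`: a triangular array
`(a i j)`, rows `i = 0, …, r-1` (from the top), with `a i j` defined for
`i ≤ j ≤ r-1` (and normalized to `0` outside the triangle), top row `λ`, and the
interlacing inequalities `a i j ≥ a (i+1) (j+1) ≥ a i (j+1)`. -/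
structure GTPattern (r : ℕ) (lam : Fin r → ℕ) where
  a : ℕ → ℕ → ℕ
  top : ∀ j : Fin r, a 0 (j : ℕ) = lam j
  interlace : ∀ i j : ℕ, i ≤ j → j + 1 < r →
    a (i + 1) (j + 1) ≤ a i j ∧ a i (j + 1) ≤ a (i + 1) (j + 1)
  outside : ∀ i j : ℕ, ¬(i ≤ j ∧ j < r) → a i j = 0

/-- The sum of the `i`-th row of a Gelfand-Tsetlin pattern. -/
def GTPattern.rowSum {r : ℕ} {lam : Fin r → ℕ} (P : GTPattern r lam) (i : ℕ) : ℕ :=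
  ∑ j ∈ Finset.Ico i r, P.a i j

/-- `true` = spin −, `false` = spin +.  The admissible five-vertex configurations
`(left, top, right, bottom)`: spin is conserved, and the type-`b₁` configuration
`(+,−,+,−)` is forbidden.  This leaves exactly the five configurations
`(+,+,+,+)`, `(−,−,−,−)`, `(−,+,−,+)`, `(−,+,+,−)`, `(+,−,−,+)`. -/
def admU (a b c d : Bool) : Prop :=
  ((if a then 1 else 0) + (if b then 1 else 0) : ℕ)
      = (if c then 1 else 0) + (if d then 1 else 0) ∧
  ¬(a = false ∧ b = true ∧ c = false ∧ d = true)

/-- A state of the uncolored five-vertex model `S_{z,λ}`: a grid with rows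
`0, …, r-1` (top to bottom) and columns labeled `0, …, N` from *right to left*.
`V i j` is the spin on the vertical edge in column (label) `j` between row `i-1`
and row `i` (`V 0` is the top boundary, `V r` the bottom); `H i k` is the spin on
the `k`-th horizontal edge of row `i`, counted from the left (`H i 0` is the left
boundary, `H i (N+1)` the right boundary).  The vertex of row `i` and column label
`j` has left edge `H i (N-j)`, top edge `V i j`, right edge `H i (N-j+1)` and
bottom edge `V (i+1) j`.  Boundary conditions: the top boundary has `−` exactly in
the columns labeled `λ_i + r - 1 - i` (0-based `i`), the left and bottom boundary
are `+`, the right boundary is `−`. -/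
structure UState (r N : ℕ) (lam : Fin r → ℕ) where
  V : Fin (r + 1) → Fin (N + 1) → Bool
  H : Fin r → Fin (N + 2) → Bool
  top : ∀ j : Fin (N + 1), V 0 j = true ↔ ∃ i : Fin r, (j : ℕ) = lam i + (r - 1 - (i : ℕ))
  bottom : ∀ j, V (Fin.last r) j = false
  left : ∀ i, H i 0 = false
  right : ∀ i, H i (Fin.last (N + 1)) = true
  adm : ∀ (i : Fin r) (j : Fin (N + 1)),
    admU (H i ⟨N - (j : ℕ), by omega⟩) (V i.castSucc j)
      (H i ⟨N - (j : ℕ) + 1, by omega⟩) (V i.succ j)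

/-- The Boltzmann weight of a state: a vertex in row `i` contributes `z_i` exactly
when the spin on the edge to its left is `−`, otherwise `1`. -/
noncomputable def uweight {r N : ℕ} {lam : Fin r → ℕ} (s : UState r N lam) : LP r :=
  ∏ i : Fin r, ∏ k : Fin (N + 1),
    if s.H i k.castSucc then mono (Pi.single i 1) else 1

/-- The partition function of the uncolored five-vertex model. -/
noncomputable def Zpart (r N : ℕ) (lam : Fin r → ℕ) : LP r :=
  ∑ᶠ s : UState r N lam, uweight s

/-- The Weyl vector `ρ = (r-1, r-2, …, 0)`. -/
def rhoWt (r : ℕ) : Fin r → ℤ := fun i => ((r - 1 - (i : ℕ) : ℕ) : ℤ)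

/-- The Schur polynomial `s_λ(z_1, …, z_r)` as a Laurent polynomial, via its
combinatorial definition: the sum of `z^{wt T}` over semistandard Young tableaux of
shape `λ` with entries in `{1, …, r}` (0-based: entries `< r`). -/
noncomputable def schurL (r : ℕ) (μ : YoungDiagram) : LP r :=
  ∑ᶠ T : {T : SemistandardYoungTableau μ // ∀ c ∈ μ.cells, T.1 c.1 c.2 < r},
    mono fun i => (wtT T.1 (i : ℕ) : ℤ)

/-- Colored spins: `none` is the spin `+`, and `some c` is a `−` spin carrying the
colour `c_{c+1}` (0-based `c`); the colours are ordered `c_1 > c_2 > ⋯ > c_r`, so a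
*smaller* index means a *larger* colour.  Admissible colored configurations
`(left, top, right, bottom)`: type `a₁` (all `+`); type `a₂` (left and top colored,
the larger colour exits right and the smaller colour exits bottom — in indices,
right is the `min` and bottom is the `max`); types `b₂`/`c₁` (colored path entering
on the left and exiting right or bottom); type `c₂` (entering on top and exiting
right).  The type-`b₁` configuration (entering on top and exiting bottom with `+`
horizontally) is forbidden, as is everything else. -/
def admC (r : ℕ) (a b c d : Option (Fin r)) : Prop :=
  (a = none ∧ b = none ∧ c = none ∧ d = none) ∨
  (∃ x y : Fin r, a = some x ∧ b = some y ∧ c = some (min x y) ∧ d = some (max x y)) ∨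
  (∃ x : Fin r, a = some x ∧ b = none ∧
    ((c = some x ∧ d = none) ∨ (c = none ∧ d = some x))) ∨
  (∃ x : Fin r, a = none ∧ b = some x ∧ c = some x ∧ d = none)

/-- A state of the colored five-vertex model `S_{z,λ,w}`; grid coordinates as in the
uncolored model.  Boundary conditions: the top boundary carries colour `c_{i+1}`
(i.e. `some i`) exactly in the column labeled `λ_i + r - 1 - i` (0-based `i`); the
right boundary carries, from top to bottom, the colours `w c` (row `i` carries
`some (w⁻¹ i)`); all other boundary edges are `+`. -/
structure CState (r N : ℕ) (lam : Fin r → ℕ) (w : Equiv.Perm (Fin r)) where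
  V : Fin (r + 1) → Fin (N + 1) → Option (Fin r)
  H : Fin r → Fin (N + 2) → Option (Fin r)
  top : ∀ (i : Fin r) (j : Fin (N + 1)),
    V 0 j = some i ↔ (j : ℕ) = lam i + (r - 1 - (i : ℕ))
  bottom : ∀ j, V (Fin.last r) j = none
  left : ∀ i, H i 0 = none
  right : ∀ i : Fin r, H i (Fin.last (N + 1)) = some (w⁻¹ i)
  adm : ∀ (i : Fin r) (j : Fin (N + 1)),
    admC r (H i ⟨N - (j : ℕ), by omega⟩) (V i.castSucc j)
      (H i ⟨N - (j : ℕ) + 1, by omega⟩) (V i.succ j)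

/-- The Boltzmann weight of a colored state: a vertex in row `i` contributes `z_i`
exactly when the edge to its left is colored, otherwise `1`. -/
noncomputable def cweight {r N : ℕ} {lam : Fin r → ℕ} {w : Equiv.Perm (Fin r)}
    (s : CState r N lam w) : LP r :=
  ∏ i : Fin r, ∏ k : Fin (N + 1),
    if (s.H i k.castSucc).isSome then mono (Pi.single i 1) else 1

/-- The partition function of the colored five-vertex model `S_{z,λ,w}`. -/
noncomputable def Zcol (r N : ℕ) (lam : Fin r → ℕ) (w : Equiv.Perm (Fin r)) : LP r :=
  ∑ᶠ s : CState r N lam w, cweight s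

namespace CPF

lemma chainN (f : ℕ → ℕ) : ∀ (b a : ℕ), a < b →
    (∀ k, a ≤ k → k + 1 ≤ b → f k < f (k + 1)) → f a < f b := by
  intro b
  induction b with
  | zero => omega
  | succ b ihb =>
    intro a hab h
    rcases Nat.lt_or_ge a b with h1 | h2
    · have hx := ihb a h1 (fun k hk1 hk2 => h k hk1 (by omega))
      have hy := h b (by omega) (by omega)
      omega
    · have : a = b := by omega
      subst this
      exact h a le_rfl le_rfl

lemma chainFin {r : ℕ} (g : Fin r → ℕ) (p q : Fin r) (hpq : (p : ℕ) < (q : ℕ))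
    (h : ∀ (k : ℕ) (hk1 : k < r) (hk2 : k + 1 < r), (p : ℕ) ≤ k → k + 1 ≤ (q : ℕ) →
      g ⟨k, hk1⟩ < g ⟨k + 1, hk2⟩) :
    g p < g q := by
  have hmain := chainN (fun k => if hk : k < r then g ⟨k, hk⟩ else 0) (q : ℕ) (p : ℕ) hpq ?_
  · rw [dif_pos p.isLt, dif_pos q.isLt] at hmain
    simpa only [Fin.eta] using hmain
  · intro k hk1 hk2
    have ha : k < r := by have := q.isLt; omega
    have hb : k + 1 < r := by have := q.isLt; omega
    rw [dif_pos ha, dif_pos hb]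
    exact h k ha hb hk1 hk2

def invSet {r : ℕ} (w : Equiv.Perm (Fin r)) : Finset (Fin r × Fin r) :=
  Finset.univ.filter (fun p => p.1 < p.2 ∧ w p.2 < w p.1)

def invN {r : ℕ} (w : Equiv.Perm (Fin r)) : ℕ := (invSet w).card

lemma swap_rev {r : ℕ} {a b u v : Fin r} (hab : a < b) (hadj : (b : ℕ) = (a : ℕ) + 1)
    (huv : u < v) (h : Equiv.swap a b v < Equiv.swap a b u) : u = a ∧ v = b := by
  have hval : ∀ x : Fin r, x ≠ a → x ≠ b → Equiv.swap a b x = x := fun x hx1 hx2 =>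
    Equiv.swap_apply_of_ne_of_ne hx1 hx2
  rw [Fin.lt_def] at huv hab
  rcases eq_or_ne u a with hu | hu
  · rcases eq_or_ne v b with hv | hv
    · exact ⟨hu, hv⟩
    · exfalso
      have hcu := congrArg Fin.val hu
      have hv2 : v ≠ a := by
        intro he
        have := congrArg Fin.val he
        omega
      rw [hu, Equiv.swap_apply_left, hval v hv2 hv] at h
      rw [Fin.lt_def] at h
      omega
  · rcases eq_or_ne u b with hub | hub
    · exfalso
      have hcu := congrArg Fin.val hub
      have hv1 : v ≠ a := by
        intro he
        have := congrArg Fin.val he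
        omega
      have hv2 : v ≠ b := by
        intro he
        have := congrArg Fin.val he
        omega
      rw [hub, Equiv.swap_apply_right, hval v hv1 hv2] at h
      rw [Fin.lt_def] at h
      omega
    · rcases eq_or_ne v a with hva | hva
      · exfalso
        have hcv := congrArg Fin.val hva
        rw [hva, Equiv.swap_apply_left, hval u hu hub] at h
        rw [Fin.lt_def] at h
        omega
      · rcases eq_or_ne v b with hvb | hvb
        · exfalso
          have hcv := congrArg Fin.val hvb
          rw [hvb, Equiv.swap_apply_right, hval u hu hub] at h
          rw [Fin.lt_def] at h
          have hune : (u : ℕ) ≠ (a : ℕ) := fun he => hu (Fin.ext he)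
          omega
        · exfalso
          rw [hval u hu hub, hval v hva hvb] at h
          rw [Fin.lt_def] at h
          omega

lemma swap_lemma {r m : ℕ} (hm : m + 1 < r) {u v : Fin r} (huv : u < v)
    (h : sPerm r m v < sPerm r m u) :
    u = ⟨m, by omega⟩ ∧ v = ⟨m + 1, hm⟩ := by
  rw [sPerm, dif_pos hm] at h
  exact swap_rev (Fin.mk_lt_mk.mpr (by omega)) rfl huv h

lemma invN_one {r : ℕ} : invN (1 : Equiv.Perm (Fin r)) = 0 := by
  rw [invN, Finset.card_eq_zero, invSet, Finset.filter_eq_empty_iff]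
  rintro p -
  simp only [Equiv.Perm.one_apply]
  rintro ⟨h1, h2⟩
  exact absurd h1 (not_lt.mpr (le_of_lt h2))

lemma invN_mul_le {r m : ℕ} (u : Equiv.Perm (Fin r)) :
    invN (sPerm r m * u) ≤ invN u + 1 := by
  by_cases hm : m + 1 < r
  · have hsub : invSet (sPerm r m * u) ⊆
        invSet u ∪ {(u⁻¹ ⟨m, by omega⟩, u⁻¹ ⟨m + 1, hm⟩)} := by
      intro p hp
      simp only [invSet, Finset.mem_filter, Finset.mem_univ, true_and] at hp
      obtain ⟨h1, h2⟩ := hp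
      rw [Finset.mem_union]
      by_cases hc : u p.2 < u p.1
      · left
        simp only [invSet, Finset.mem_filter, Finset.mem_univ, true_and]
        exact ⟨h1, hc⟩
      · right
        have hne : u p.1 ≠ u p.2 := fun he => absurd (u.injective he) (ne_of_lt h1)
        have hlt : u p.1 < u p.2 := lt_of_le_of_ne (not_lt.mp hc) hne
        simp only [Equiv.Perm.mul_apply] at h2
        obtain ⟨e1, e2⟩ := swap_lemma hm hlt h2
        have hp1 : p.1 = u⁻¹ ⟨m, by omega⟩ := by rw [← e1]; simp
        have hp2 : p.2 = u⁻¹ ⟨m + 1, hm⟩ := by rw [← e2]; simp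
        simp only [Finset.mem_singleton]
        exact Prod.ext hp1 hp2
    calc invN (sPerm r m * u) ≤ (invSet u ∪ {(u⁻¹ ⟨m, by omega⟩, u⁻¹ ⟨m + 1, hm⟩)}).card :=
          Finset.card_le_card hsub
      _ ≤ invN u + 1 := le_trans (Finset.card_union_le _ _) (by simp [invN])
  · rw [sPerm, dif_neg hm, one_mul]
    omega

lemma invN_descent {r m : ℕ} (hm : m + 1 < r) (u : Equiv.Perm (Fin r))
    (hdes : u⁻¹ ⟨m + 1, hm⟩ < u⁻¹ ⟨m, by omega⟩) :
    invN (sPerm r m * u) < invN u := by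
  set p0 : Fin r × Fin r := (u⁻¹ ⟨m + 1, hm⟩, u⁻¹ ⟨m, by omega⟩) with hp0
  have hmem : p0 ∈ invSet u := by
    simp only [invSet, Finset.mem_filter, Finset.mem_univ, true_and, hp0]
    refine ⟨hdes, ?_⟩
    simp only [Equiv.Perm.inv_def, Equiv.apply_symm_apply]
    exact Fin.mk_lt_mk.mpr (by omega)
  have hsub : invSet (sPerm r m * u) ⊆ (invSet u).erase p0 := by
    intro p hp
    simp only [invSet, Finset.mem_filter, Finset.mem_univ, true_and] at hp
    obtain ⟨h1, h2⟩ := hp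
    simp only [Equiv.Perm.mul_apply] at h2
    rw [Finset.mem_erase]
    constructor
    · intro he
      rw [he, hp0] at h2
      simp only [Equiv.Perm.inv_def, Equiv.apply_symm_apply] at h2
      rw [sPerm, dif_pos hm, Equiv.swap_apply_left, Equiv.swap_apply_right] at h2
      exact absurd (Fin.mk_lt_mk.mp h2) (by omega)
    · simp only [invSet, Finset.mem_filter, Finset.mem_univ, true_and]
      refine ⟨h1, ?_⟩
      by_contra hc
      have hne : u p.1 ≠ u p.2 := fun he => absurd (u.injective he) (ne_of_lt h1)
      have hlt : u p.1 < u p.2 := lt_of_le_of_ne (not_lt.mp hc) hne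
      obtain ⟨e1, e2⟩ := swap_lemma hm hlt h2
      have hp1 : p.1 = u⁻¹ ⟨m, by omega⟩ := by rw [← e1]; simp
      have hp2 : p.2 = u⁻¹ ⟨m + 1, hm⟩ := by rw [← e2]; simp
      rw [hp1, hp2] at h1
      exact absurd h1 (not_lt.mpr (le_of_lt hdes))
  calc invN (sPerm r m * u) ≤ ((invSet u).erase p0).card := Finset.card_le_card hsub
    _ < (invSet u).card := Finset.card_erase_lt_of_mem hmem

lemma strictMono_le_apply {r : ℕ} {f : Fin r → Fin r} (h : StrictMono f) :
    ∀ (k : ℕ) (i : Fin r), (i : ℕ) = k → k ≤ (f i : ℕ) := by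
  intro k
  induction k with
  | zero => intro i _; omega
  | succ k ih =>
    intro i hi
    have hik : k < r := by omega
    have hlt : (⟨k, hik⟩ : Fin r) < i := Fin.lt_def.mpr (show k < (i : ℕ) by omega)
    have h1 := h hlt
    rw [Fin.lt_def] at h1
    have h2 := ih ⟨k, hik⟩ rfl
    have h3 : ((⟨k, hik⟩ : Fin r) : ℕ) = k := rfl
    omega

lemma strictMono_eq_one {r : ℕ} {u : Equiv.Perm (Fin r)}
    (h : StrictMono (fun x => u x : Fin r → Fin r)) : u = 1 := by
  have hinv : StrictMono (fun x => u⁻¹ x : Fin r → Fin r) := by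
    intro a b hab
    have h2 : u (u⁻¹ a) < u (u⁻¹ b) := by simpa using hab
    exact (h.lt_iff_lt).mp h2
  apply Equiv.ext
  intro i
  simp only [Equiv.Perm.one_apply]
  have h1 : (i : ℕ) ≤ (u i : ℕ) := strictMono_le_apply h (i : ℕ) i rfl
  have h2 : ((u i : Fin r) : ℕ) ≤ ((u⁻¹ (u i) : Fin r) : ℕ) :=
    strictMono_le_apply hinv ((u i : Fin r) : ℕ) (u i) rfl
  simp only [Equiv.Perm.inv_def, Equiv.symm_apply_apply] at h2
  exact Fin.ext (le_antisymm (by omega) h1)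

lemma invN_zero_eq_one {r : ℕ} {u : Equiv.Perm (Fin r)} (h : invN u = 0) : u = 1 := by
  apply strictMono_eq_one
  intro a b hab
  rw [invN, Finset.card_eq_zero, invSet, Finset.filter_eq_empty_iff] at h
  have h1 := h (Finset.mem_univ (a, b))
  simp only [not_and] at h1
  have h2 := h1 hab
  have hne : u a ≠ u b := fun he => absurd (u.injective he) (ne_of_lt hab)
  exact lt_of_le_of_ne (not_lt.mp h2) hne

lemma exists_descent {r : ℕ} {u : Equiv.Perm (Fin r)} (h : u ≠ 1) :
    ∃ (m : ℕ) (hm : m + 1 < r), u⁻¹ ⟨m + 1, hm⟩ < u⁻¹ ⟨m, by omega⟩ := by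
  by_contra hc
  push_neg at hc
  apply h
  have hmono : StrictMono (fun x => u⁻¹ x : Fin r → Fin r) := by
    intro a b hab
    rw [Fin.lt_def] at hab ⊢
    refine chainFin (fun x => ((u⁻¹ x : Fin r) : ℕ)) a b hab ?_
    intro k hk1 hk2 _ _
    have hle := hc k hk2
    have hne : u⁻¹ (⟨k + 1, hk2⟩ : Fin r) ≠ u⁻¹ ⟨k, by omega⟩ := by
      intro he
      have h2 := u⁻¹.injective he
      have h3 := congrArg Fin.val h2
      simp only [Fin.val_mk] at h3
      omega
    have h4 : u⁻¹ (⟨k, by omega⟩ : Fin r) < u⁻¹ ⟨k + 1, hk2⟩ :=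
      lt_of_le_of_ne hle (Ne.symm hne)
    rw [Fin.lt_def] at h4
    exact h4
  have h5 : u⁻¹ = 1 := strictMono_eq_one hmono
  calc u = (u⁻¹)⁻¹ := by simp
    _ = 1 := by rw [h5]; simp

lemma sPerm_mul_self (r m : ℕ) : sPerm r m * sPerm r m = 1 := by
  rw [sPerm]
  split_ifs with h
  · exact Equiv.swap_mul_self _ _
  · simp

lemma word_of_inv {r : ℕ} : ∀ (n : ℕ) (u : Equiv.Perm (Fin r)), invN u ≤ n →
    ∃ l : List ℕ, OKWord r l ∧ wordProd r l = u ∧ l.length = invN u := by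
  intro n
  induction n with
  | zero =>
    intro u hu
    have h0 : invN u = 0 := by omega
    have h1 : u = 1 := invN_zero_eq_one h0
    subst h1
    rw [h0]
    exact ⟨[], by intro x hx; simp at hx, rfl, rfl⟩
  | succ n ih =>
    intro u hu
    by_cases h1 : u = 1
    · subst h1
      rw [invN_one]
      exact ⟨[], by intro x hx; simp at hx, rfl, rfl⟩
    · obtain ⟨m, hm, hdes⟩ := exists_descent h1
      set u' := sPerm r m * u with hu'
      have hlt : invN u' < invN u := invN_descent hm u hdes
      obtain ⟨l', hOK, hprod, hlen⟩ := ih u' (by omega)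
      have hback : u = sPerm r m * u' := by
        rw [hu', ← mul_assoc, sPerm_mul_self, one_mul]
      have hge : invN u ≤ invN u' + 1 := by
        rw [hback]; exact invN_mul_le u'
      refine ⟨m :: l', ?_, ?_, ?_⟩
      · intro x hx
        rcases List.mem_cons.mp hx with he | hmem
        · rw [he]; exact hm
        · exact hOK x hmem
      · rw [wordProd, List.map_cons, List.prod_cons, ← wordProd, hprod, ← hback]
      · simp only [List.length_cons, hlen]
        omega

lemma invN_word_le {r : ℕ} : ∀ l : List ℕ, invN (wordProd r l) ≤ l.length := by
  intro l
  induction l with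
  | nil =>
    rw [wordProd]
    simp [invN_one]
  | cons m l ih =>
    rw [wordProd, List.map_cons, List.prod_cons, ← wordProd]
    calc invN (sPerm r m * wordProd r l) ≤ invN (wordProd r l) + 1 := invN_mul_le _
      _ ≤ l.length + 1 := by omega
      _ = (m :: l).length := by simp

lemma len_eq_invN {r : ℕ} (u : Equiv.Perm (Fin r)) : len r u = invN u := by
  obtain ⟨l, hOK, hprod, hlen⟩ := word_of_inv (invN u) u le_rfl
  have hmem : invN u ∈ {n | ∃ l : List ℕ, OKWord r l ∧ wordProd r l = u ∧ l.length = n} :=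
    ⟨l, hOK, hprod, hlen⟩
  refine le_antisymm (Nat.sInf_le hmem) ?_
  have hne : {n | ∃ l : List ℕ, OKWord r l ∧ wordProd r l = u ∧ l.length = n}.Nonempty :=
    ⟨invN u, hmem⟩
  obtain ⟨l', _, hprod', hlen'⟩ := Nat.sInf_mem hne
  rw [len, ← hlen', ← hprod']
  exact invN_word_le l'

lemma coset_min {r : ℕ} (lam : Fin r → ℕ)
    (hdom : ∀ i j : Fin r, i ≤ j → lam j ≤ lam i)
    (w : Equiv.Perm (Fin r))
    (hblk : ∀ (k : ℕ) (hk1 : k < r) (hk2 : k + 1 < r),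
      lam ⟨k, hk1⟩ = lam ⟨k + 1, hk2⟩ →
        ((w ⟨k, hk1⟩ : Fin r) : ℕ) < ((w ⟨k + 1, hk2⟩ : Fin r) : ℕ))
    (v : Equiv.Perm (Fin r)) (hv : ∀ k, lam (v k) = lam k) :
    len r w ≤ len r (w * v) := by
  rw [len_eq_invN, len_eq_invN, invN, invN]
  refine Finset.card_le_card_of_injOn (fun p => (v⁻¹ p.1, v⁻¹ p.2)) ?_ ?_
  · intro p hp
    simp only [invSet, Finset.coe_filter, Finset.mem_coe, Set.mem_setOf_eq, Finset.mem_filter, Finset.mem_univ, true_and] at hp ⊢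
    obtain ⟨h1, h2⟩ := hp
    have hmul : ∀ x : Fin r, (w * v) (v⁻¹ x) = w x := by
      intro x
      simp [Equiv.Perm.mul_apply]
    constructor
    · have hne : v⁻¹ p.1 ≠ v⁻¹ p.2 := fun he => absurd (v⁻¹.injective he) (ne_of_lt h1)
      rcases lt_or_gt_of_ne hne with hlt | hgt
      · exact hlt
      · exfalso
        have hl1 : lam (v⁻¹ p.1) = lam p.1 := by
          have := hv (v⁻¹ p.1)
          simpa using this.symm
        have hl2 : lam (v⁻¹ p.2) = lam p.2 := by
          have := hv (v⁻¹ p.2)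
          simpa using this.symm
        have hle1 : lam p.2 ≤ lam p.1 := hdom p.1 p.2 (le_of_lt h1)
        have hle2 : lam p.1 ≤ lam p.2 := by
          rw [← hl1, ← hl2]
          exact hdom (v⁻¹ p.2) (v⁻¹ p.1) (le_of_lt hgt)
        have hmono : ((w p.1 : Fin r) : ℕ) < ((w p.2 : Fin r) : ℕ) := by
          rw [Fin.lt_def] at h1
          refine chainFin (fun x => ((w x : Fin r) : ℕ)) p.1 p.2 h1 ?_
          intro k hk1 hk2 hk3 hk4
          refine hblk k hk1 hk2 ?_
          have ha : lam (⟨k, hk1⟩ : Fin r) ≤ lam p.1 :=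
            hdom p.1 ⟨k, hk1⟩ (Fin.le_def.mpr (by simp only [Fin.val_mk]; omega))
          have hb : lam p.2 ≤ lam (⟨k, hk1⟩ : Fin r) :=
            hdom ⟨k, hk1⟩ p.2 (Fin.le_def.mpr (by simp only [Fin.val_mk]; omega))
          have hc : lam (⟨k + 1, hk2⟩ : Fin r) ≤ lam p.1 :=
            hdom p.1 ⟨k + 1, hk2⟩ (Fin.le_def.mpr (by simp only [Fin.val_mk]; omega))
          have hd : lam p.2 ≤ lam (⟨k + 1, hk2⟩ : Fin r) :=
            hdom ⟨k + 1, hk2⟩ p.2 (Fin.le_def.mpr (by simp only [Fin.val_mk]; omega))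
          omega
        rw [Fin.lt_def] at h2
        omega
    · rw [hmul, hmul]
      exact h2
  · intro p _ q _ he
    simp only [Prod.mk.injEq] at he
    obtain ⟨e1, e2⟩ := he
    exact Prod.ext (v⁻¹.injective e1) (v⁻¹.injective e2)

end CPF

namespace CPF

variable {r N : ℕ} {lam : Fin r → ℕ} {w : Equiv.Perm (Fin r)}

def eL (s : CState r N lam w) (t : Fin r) (j : Fin (N + 1)) : Option (Fin r) :=
  s.H t ⟨N - (j : ℕ), by omega⟩

def eR (s : CState r N lam w) (t : Fin r) (j : Fin (N + 1)) : Option (Fin r) :=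
  s.H t ⟨N - (j : ℕ) + 1, by omega⟩

def eT (s : CState r N lam w) (t : Fin r) (j : Fin (N + 1)) : Option (Fin r) :=
  s.V t.castSucc j

def eB (s : CState r N lam w) (t : Fin r) (j : Fin (N + 1)) : Option (Fin r) :=
  s.V t.succ j

lemma adm' (s : CState r N lam w) (t : Fin r) (j : Fin (N + 1)) :
    admC r (eL s t j) (eT s t j) (eR s t j) (eB s t j) := s.adm t j

lemma link (s : CState r N lam w) (t : Fin r) (u v : Fin (N + 1))
    (h : (u : ℕ) + 1 = (v : ℕ)) : eL s t u = eR s t v := by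
  unfold eL eR
  congr 1
  have hv : (v : ℕ) ≤ N := by omega
  exact Fin.ext (by simp; omega)

lemma leftB (s : CState r N lam w) (t : Fin r) (u : Fin (N + 1)) (h : (u : ℕ) = N) :
    eL s t u = none := by
  unfold eL
  have : (⟨N - (u : ℕ), by omega⟩ : Fin (N + 2)) = ⟨0, by omega⟩ := Fin.ext (by simp [h])
  rw [this]
  exact s.left t

lemma rightB (s : CState r N lam w) (t : Fin r) (u : Fin (N + 1)) (h : (u : ℕ) = 0) :
    eR s t u = some (w⁻¹ t) := by
  unfold eR
  have : (⟨N - (u : ℕ) + 1, by omega⟩ : Fin (N + 2)) = Fin.last (N + 1) := Fin.ext (by simp [h, Fin.last])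
  rw [this]
  exact s.right t

lemma tstep (s : CState r N lam w) {t : Fin r} {j : Fin (N + 1)} {c : Fin r}
    (h : eT s t j = some c) : eR s t j = some c ∨ eB s t j = some c := by
  rcases adm' s t j with ⟨_, h2, _, _⟩ | ⟨x, y, _, hy, hR, hB⟩ | ⟨x, _, h2, _⟩ | ⟨x, _, h2, hR, _⟩
  · rw [h] at h2; exact absurd h2 (by simp)
  · rw [h] at hy
    have hy' : c = y := by injection hy
    subst hy'
    rcases le_total x c with hxy | hxy
    · right; rw [hB, max_eq_right hxy]
    · left; rw [hR, min_eq_right hxy]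
  · rw [h] at h2; exact absurd h2 (by simp)
  · rw [h] at h2
    have : c = x := by injection h2
    subst this
    left; exact hR

lemma dich (s : CState r N lam w) {t : Fin r} {j : Fin (N + 1)} {c : Fin r}
    (h : eL s t j = some c) : eR s t j = some c ∨ eB s t j = some c := by
  rcases adm' s t j with ⟨h1, _, _, _⟩ | ⟨x, y, hx, _, hR, hB⟩ | ⟨x, hx, _, hcd⟩ | ⟨x, h1, _, _⟩
  · rw [h] at h1; exact absurd h1 (by simp)
  · rw [h] at hx
    have e : c = x := by injection hx
    subst e
    rcases le_total c y with hxy | hxy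
    · left; rw [hR, min_eq_left hxy]
    · right; rw [hB, max_eq_left hxy]
  · rw [h] at hx
    have e : c = x := by injection hx
    subst e
    rcases hcd with ⟨hR, _⟩ | ⟨_, hB⟩
    · left; exact hR
    · right; exact hB
  · rw [h] at h1; exact absurd h1 (by simp)

lemma a2 (s : CState r N lam w) {t : Fin r} {j : Fin (N + 1)} {x y : Fin r}
    (hx : eL s t j = some x) (hy : eT s t j = some y) :
    eR s t j = some (min x y) ∧ eB s t j = some (max x y) := by
  rcases adm' s t j with ⟨h1, _, _, _⟩ | ⟨x', y', hx', hy', hR, hB⟩ | ⟨x', _, h2, _⟩ | ⟨x', h1, _, _⟩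
  · rw [hx] at h1; exact absurd h1 (by simp)
  · rw [hx] at hx'; rw [hy] at hy'
    have e1 : x = x' := by injection hx'
    have e2 : y = y' := by injection hy'
    subst e1; subst e2
    exact ⟨hR, hB⟩
  · rw [hy] at h2; exact absurd h2 (by simp)
  · rw [hx] at h1; exact absurd h1 (by simp)

lemma a5 (s : CState r N lam w) {t : Fin r} {j : Fin (N + 1)} {c : Fin r}
    (hT : eT s t j = some c) (hB : eB s t j = some c) :
    ∃ z : Fin r, z ≤ c ∧ eR s t j = some z := by
  rcases adm' s t j with ⟨_, h2, _, _⟩ | ⟨x, y, hx, hy, hR, hB'⟩ | ⟨x, _, h2, _⟩ | ⟨x, _, h2, _, hd⟩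
  · rw [hT] at h2; exact absurd h2 (by simp)
  · rw [hT] at hy
    have e2 : c = y := by injection hy
    subst e2
    refine ⟨min x c, min_le_right _ _, hR⟩
  · rw [hT] at h2; exact absurd h2 (by simp)
  · rw [hB] at hd; exact absurd hd.symm (by simp)

end CPF

namespace CPF

variable {r N : ℕ} {lam : Fin r → ℕ} {w : Equiv.Perm (Fin r)}

lemma walk (s : CState r N lam w) (t : Fin r) (e : Fin r) :
    ∀ (n : ℕ) (j j' : Fin (N + 1)), (j' : ℕ) ≤ (j : ℕ) → (j : ℕ) - (j' : ℕ) ≤ n →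
    eR s t j = some e →
    (∃ j'' : Fin (N + 1), (j' : ℕ) ≤ (j'' : ℕ) ∧ (j'' : ℕ) < (j : ℕ) ∧ eB s t j'' = some e) ∨
      eR s t j' = some e := by
  intro n
  induction n with
  | zero =>
    intro j j' hle hd hR
    have : j' = j := Fin.ext (by omega)
    subst this
    exact Or.inr hR
  | succ n ih =>
    intro j j' hle hd hR
    by_cases hjj : (j' : ℕ) = (j : ℕ)
    · have : j' = j := Fin.ext hjj
      subst this
      exact Or.inr hR
    · have hlt : (j' : ℕ) < (j : ℕ) := by omega
      have hj1 : (j : ℕ) - 1 < N + 1 := by omega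
      set jm : Fin (N + 1) := ⟨(j : ℕ) - 1, hj1⟩ with hjm
      have hlink : eL s t jm = eR s t j := link s t jm j (by simp [hjm]; omega)
      have hLm : eL s t jm = some e := by rw [hlink]; exact hR
      rcases dich s hLm with hRm | hBm
      · rcases ih jm j' (by simp [hjm]; omega) (by simp [hjm]; omega) hRm with ⟨j'', h1, h2, h3⟩ | h
        · exact Or.inl ⟨j'', h1, by simp [hjm] at h2; omega, h3⟩
        · exact Or.inr h
      · exact Or.inl ⟨jm, by simp [hjm]; omega, by simp only [hjm, Fin.val_mk]; omega, hBm⟩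

lemma cf (s : CState r N lam w) {t : Fin r} {jc : Fin (N + 1)} {c : Fin r}
    (h : eT s t jc = some c) :
    (∃ j' : Fin (N + 1), (j' : ℕ) ≤ (jc : ℕ) ∧ eB s t j' = some c) ∨ w c = t := by
  rcases tstep s h with hR | hB
  · rcases walk s t c (jc : ℕ) jc ⟨0, by omega⟩ (by simp) (by simp) hR with ⟨j'', h1, h2, h3⟩ | h0
    · exact Or.inl ⟨j'', by omega, h3⟩
    · right
      rw [rightB s t ⟨0, by omega⟩ rfl] at h0
      have : w⁻¹ t = c := by injection h0
      rw [← this]; simp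
  · exact Or.inl ⟨jc, le_refl _, hB⟩

lemma pres (s : CState r N lam w) :
    ∀ (n : ℕ) (i : Fin (r + 1)) (j : Fin (N + 1)) (e : Fin r), r - (i : ℕ) ≤ n →
      s.V i j = some e → (i : ℕ) ≤ (w e : ℕ) := by
  intro n
  induction n with
  | zero =>
    intro i j e hn hV
    have : i = Fin.last r := Fin.ext (by simp [Fin.last]; omega)
    subst this
    rw [s.bottom j] at hV
    exact absurd hV (by simp)
  | succ n ih =>
    intro i j e hn hV
    by_cases hir : (i : ℕ) = r
    · have : i = Fin.last r := Fin.ext (by simp [Fin.last]; omega)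
      subst this
      rw [s.bottom j] at hV
      exact absurd hV (by simp)
    · have hlt : (i : ℕ) < r := by omega
      set t : Fin r := ⟨(i : ℕ), hlt⟩ with ht
      have hcast : t.castSucc = i := Fin.ext (by simp [ht])
      have hT : eT s t j = some e := by unfold eT; rw [hcast]; exact hV
      have hsucc : ((t.succ : Fin (r + 1)) : ℕ) = (i : ℕ) + 1 := by simp [ht]
      have htv : (t : ℕ) = (i : ℕ) := rfl
      rcases cf s hT with ⟨j', _, hB⟩ | hw
      · have h2 := ih t.succ j' e (by rw [Fin.val_succ, htv]; omega) hB
        rw [Fin.val_succ, htv] at h2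
        omega
      · have hwe : (w e : ℕ) = (i : ℕ) := by rw [hw, htv]
        omega

end CPF

namespace CPF

variable {r N : ℕ} {lam : Fin r → ℕ} {w : Equiv.Perm (Fin r)}

def CrossAt (s : CState r N lam w) (c d : Fin r) : Prop :=
  ∃ (row : Fin r) (col : Fin (N + 1)), eL s row col = some c ∧ eT s row col = some d

lemma rle (s : CState r N lam w) {t : Fin r} {j : Fin (N + 1)} {c z : Fin r}
    (hT : eT s t j = some c) (hR : eR s t j = some z) : z ≤ c := by
  rcases adm' s t j with ⟨_, h2, _, _⟩ | ⟨x, y, _, hy, hR', _⟩ | ⟨x, _, h2, _⟩ | ⟨x, _, h2, hR', _⟩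
  · rw [hT] at h2; exact absurd h2 (by simp)
  · rw [hT] at hy
    have e1 : c = y := by injection hy
    rw [hR'] at hR
    have e2 : min x y = z := by injection hR
    rw [← e2, e1]
    exact min_le_right _ _
  · rw [hT] at h2; exact absurd h2 (by simp)
  · rw [hT] at h2
    have e1 : c = x := by injection h2
    rw [hR'] at hR
    have e2 : x = z := by injection hR
    rw [← e2, ← e1]

end CPF

namespace CPF

variable {r N : ℕ} {lam : Fin r → ℕ} {w : Equiv.Perm (Fin r)}

def Qprop (s : CState r N lam w) (c d : Fin r) (t₀ : ℕ) : Prop :=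
  ∃ (ht : t₀ < r + 1) (jc jd : Fin (N + 1)), (jc : ℕ) < (jd : ℕ) ∧
    s.V ⟨t₀, ht⟩ jc = some c ∧ s.V ⟨t₀, ht⟩ jd = some d

lemma qrec (s : CState r N lam w) {c d : Fin r} (hcd : c < d) :
    ∀ (n : ℕ) (t₀ : ℕ), r - t₀ ≤ n → Qprop s c d t₀ → (w c : ℕ) < (w d : ℕ) := by
  intro n
  induction n with
  | zero =>
    rintro t₀ hn ⟨ht, jc, jd, hjj, hVc, hVd⟩
    have ht0 : t₀ = r := by omega
    have : (⟨t₀, ht⟩ : Fin (r + 1)) = Fin.last r := Fin.ext (by simp [Fin.last]; omega)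
    rw [this, s.bottom] at hVc
    exact absurd hVc (by simp)
  | succ n ih =>
    rintro t₀ hn ⟨ht, jc, jd, hjj, hVc, hVd⟩
    by_cases htr : t₀ = r
    · have : (⟨t₀, ht⟩ : Fin (r + 1)) = Fin.last r := Fin.ext (by simp [Fin.last]; omega)
      rw [this, s.bottom] at hVc
      exact absurd hVc (by simp)
    · have htlt : t₀ < r := by omega
      set t : Fin r := ⟨t₀, htlt⟩ with htdef
      have hcast : t.castSucc = ⟨t₀, ht⟩ := Fin.ext (by simp [htdef])
      have hsucc : (t.succ : Fin (r + 1)) = ⟨t₀ + 1, by omega⟩ := Fin.ext (by simp [htdef])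
      have hTc : eT s t jc = some c := by unfold eT; rw [hcast]; exact hVc
      have hTd : eT s t jd = some d := by unfold eT; rw [hcast]; exact hVd
      -- helper: from a bottom occurrence of d at position ≥ jc and c's fate, conclude
      have finish : ∀ jd' : Fin (N + 1), (jc : ℕ) ≤ (jd' : ℕ) → eB s t jd' = some d →
          (w c : ℕ) < (w d : ℕ) := by
        intro jd' hge hBd
        rcases cf s hTc with ⟨j', hj'le, hBc⟩ | hwc
        · -- both descend : recurse
          have hne : (j' : ℕ) ≠ (jd' : ℕ) := by
            intro he
            have : j' = jd' := Fin.ext he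
            subst this
            rw [hBc] at hBd
            have : c = d := by injection hBd
            exact absurd this (ne_of_lt hcd)
          refine ih (t₀ + 1) (by omega) ⟨by omega, j', jd', by omega, ?_, ?_⟩
          · unfold eB at hBc
            rw [hsucc] at hBc
            exact hBc
          · unfold eB at hBd
            rw [hsucc] at hBd
            exact hBd
        · -- c exits right at row t₀; d is present at cut t₀+1
          have h1 : (w c : ℕ) = t₀ := by rw [hwc]
          have h2 : ((t.succ : Fin (r + 1)) : ℕ) ≤ (w d : ℕ) :=
            pres s (r + 1) t.succ jd' d (by omega) hBd
          rw [hsucc] at h2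
          simp at h2
          omega
      rcases tstep s hTd with hRd | hBd
      · -- d moves right; walk from jd down to jc
        rcases walk s t d (N + 1) jd jc (le_of_lt hjj) (by omega) hRd with ⟨j'', h1, h2, h3⟩ | hRc
        · exact finish j'' h1 h3
        · -- d's horizontal reaches c's vertex : impossible
          have := rle s hTc hRc
          exact absurd hcd (by exact not_lt.mpr this)
      · exact finish jd (le_of_lt hjj) hBd

lemma exit (s : CState r N lam w) {c d : Fin r} (hcd : c < d)
    (h : CrossAt s c d) : (w c : ℕ) < (w d : ℕ) := by
  obtain ⟨t, j, hL, hT⟩ := h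
  obtain ⟨hR, hB⟩ := a2 s hL hT
  rw [min_eq_left (le_of_lt hcd)] at hR
  rw [max_eq_right (le_of_lt hcd)] at hB
  have hsucc : (t.succ : Fin (r + 1)) = ⟨(t : ℕ) + 1, by omega⟩ := Fin.ext (by simp)
  have hdpres : s.V ⟨(t : ℕ) + 1, by omega⟩ j = some d := by
    unfold eB at hB; rw [hsucc] at hB; exact hB
  rcases walk s t c (N + 1) j ⟨0, by omega⟩ (by simp) (by omega) hR with ⟨j', h1, h2, h3⟩ | hR0
  · -- c descends before reaching the right boundary: Qprop at cut t+1
    refine qrec s hcd (r + 1) ((t : ℕ) + 1) (by omega) ⟨by omega, j', j, h2, ?_, hdpres⟩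
    unfold eB at h3
    rw [hsucc] at h3
    exact h3
  · -- c exits right at row t
    rw [rightB s t ⟨0, by omega⟩ rfl] at hR0
    have he : w⁻¹ t = c := by injection hR0
    have h1 : (w c : ℕ) = (t : ℕ) := by rw [← he]; simp
    have h2 := pres s (r + 1) ⟨(t : ℕ) + 1, by omega⟩ j d (by omega) hdpres
    simp at h2
    omega

end CPF

namespace CPF

variable {r N : ℕ} {lam : Fin r → ℕ} {w : Equiv.Perm (Fin r)}

def Padj (s : CState r N lam w) (c d : Fin r) (t₀ : ℕ) : Prop :=
  ∃ (ht : t₀ < r + 1) (jj : Fin (N + 1)), 1 ≤ (jj : ℕ) ∧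
    s.V ⟨t₀, ht⟩ jj = some c ∧ s.V ⟨t₀, ht⟩ ⟨(jj : ℕ) - 1, by omega⟩ = some d

lemma prec (s : CState r N lam w) {c d : Fin r} (hcd : c < d) :
    ∀ (n : ℕ) (t₀ : ℕ), r - t₀ ≤ n → Padj s c d t₀ → CrossAt s c d := by
  intro n
  induction n with
  | zero =>
    rintro t₀ hn ⟨ht, jj, hjj, hVc, hVd⟩
    have : (⟨t₀, ht⟩ : Fin (r + 1)) = Fin.last r := Fin.ext (by simp [Fin.last]; omega)
    rw [this, s.bottom] at hVc
    exact absurd hVc (by simp)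
  | succ n ih =>
    rintro t₀ hn ⟨ht, jj, hjj, hVc, hVd⟩
    by_cases htr : t₀ = r
    · have : (⟨t₀, ht⟩ : Fin (r + 1)) = Fin.last r := Fin.ext (by simp [Fin.last]; omega)
      rw [this, s.bottom] at hVc
      exact absurd hVc (by simp)
    · have htlt : t₀ < r := by omega
      set t : Fin r := ⟨t₀, htlt⟩ with htdef
      have hcast : t.castSucc = ⟨t₀, ht⟩ := Fin.ext (by simp [htdef])
      have hsucc : (t.succ : Fin (r + 1)) = ⟨t₀ + 1, by omega⟩ := Fin.ext (by simp [htdef])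
      set jm : Fin (N + 1) := ⟨(jj : ℕ) - 1, by omega⟩ with hjm
      have hTc : eT s t jj = some c := by unfold eT; rw [hcast]; exact hVc
      have hTd : eT s t jm = some d := by unfold eT; rw [hcast]; exact hVd
      have hlink : eL s t jm = eR s t jj := link s t jm jj (by simp [hjm]; omega)
      rcases tstep s hTc with hRc | hBc
      · -- c moves right and immediately meets d on top : crossing
        refine ⟨t, jm, ?_, hTd⟩
        rw [hlink]; exact hRc
      · -- c descends in place; the horizontal color forces d down as well
        obtain ⟨z, hz, hRz⟩ := a5 s hTc hBc
        have hLz : eL s t jm = some z := by rw [hlink]; exact hRz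
        obtain ⟨_, hBm⟩ := a2 s hLz hTd
        have hmax : max z d = d := max_eq_right (le_of_lt (lt_of_le_of_lt hz hcd))
        rw [hmax] at hBm
        refine ih (t₀ + 1) (by omega) ⟨by omega, jj, hjj, ?_, ?_⟩
        · unfold eB at hBc; rw [hsucc] at hBc; exact hBc
        · unfold eB at hBm; rw [hsucc] at hBm; exact hBm

lemma adj (s : CState r N lam w) (hNc : ∀ c : Fin r, lam c + (r - 1 - (c : ℕ)) ≤ N)
    {c d : Fin r} (hd : (d : ℕ) = (c : ℕ) + 1) (hlam : lam d = lam c) :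
    CrossAt s c d := by
  have hcd : c < d := by rw [Fin.lt_def]; omega
  have hdr : (c : ℕ) + 1 < r := by rw [← hd]; exact d.isLt
  refine prec s hcd (r + 1) 0 (by omega) ⟨by omega, ⟨lam c + (r - 1 - (c : ℕ)), by have := hNc c; omega⟩, by simp; omega, ?_, ?_⟩
  · have h0 : (⟨0, by omega⟩ : Fin (r + 1)) = 0 := rfl
    rw [h0]
    exact (s.top c _).mpr rfl
  · have h0 : (⟨0, by omega⟩ : Fin (r + 1)) = 0 := rfl
    rw [h0]
    refine (s.top d _).mpr ?_
    simp [hlam, hd]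
    omega

def Gprop (s : CState r N lam w) (a b : Fin r) (t₀ : ℕ) : Prop :=
  ∃ (ht : t₀ < r + 1) (jb ja : Fin (N + 1)), (jb : ℕ) < (ja : ℕ) ∧
    s.V ⟨t₀, ht⟩ ja = some a ∧ s.V ⟨t₀, ht⟩ jb = some b

lemma grec (s : CState r N lam w) {a b : Fin r} (hab : a < b)
    (hwab : (w a : ℕ) < (w b : ℕ)) :
    ∀ (n : ℕ) (t₀ : ℕ), r - t₀ ≤ n → Gprop s a b t₀ → CrossAt s a b := by
  intro n
  induction n with
  | zero =>
    rintro t₀ hn ⟨ht, jb, ja, hjj, hVa, hVb⟩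
    have : (⟨t₀, ht⟩ : Fin (r + 1)) = Fin.last r := Fin.ext (by simp [Fin.last]; omega)
    rw [this, s.bottom] at hVa
    exact absurd hVa (by simp)
  | succ n ih =>
    rintro t₀ hn ⟨ht, jb, ja, hjj, hVa, hVb⟩
    by_cases htr : t₀ = r
    · have : (⟨t₀, ht⟩ : Fin (r + 1)) = Fin.last r := Fin.ext (by simp [Fin.last]; omega)
      rw [this, s.bottom] at hVa
      exact absurd hVa (by simp)
    · have htlt : t₀ < r := by omega
      set t : Fin r := ⟨t₀, htlt⟩ with htdef
      have hcast : t.castSucc = ⟨t₀, ht⟩ := Fin.ext (by simp [htdef])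
      have hsucc : (t.succ : Fin (r + 1)) = ⟨t₀ + 1, by omega⟩ := Fin.ext (by simp [htdef])
      have hTa : eT s t ja = some a := by unfold eT; rw [hcast]; exact hVa
      have hTb : eT s t jb = some b := by unfold eT; rw [hcast]; exact hVb
      have htv : (t : ℕ) = t₀ := rfl
      -- helper: a descends at position ja' > jb
      have finish : ∀ ja' : Fin (N + 1), (jb : ℕ) < (ja' : ℕ) → eB s t ja' = some a →
          CrossAt s a b := by
        intro ja' hgt hBa
        rcases cf s hTb with ⟨j', hj'le, hBb⟩ | hwb
        · refine ih (t₀ + 1) (by omega) ⟨by omega, j', ja', by omega, ?_, ?_⟩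
          · unfold eB at hBa; rw [hsucc] at hBa; exact hBa
          · unfold eB at hBb; rw [hsucc] at hBb; exact hBb
        · -- b exits right at row t₀ : contradicts w a < w b
          exfalso
          have h1 : (w b : ℕ) = t₀ := by rw [hwb]
          have h2 := pres s (r + 1) t.succ ja' a (by omega) (by unfold eB at hBa; exact hBa)
          rw [hsucc] at h2
          simp at h2
          omega
      rcases tstep s hTa with hRa | hBa
      · -- a moves right: walk down to jb+1, then either descend or cross b
        set jb1 : Fin (N + 1) := ⟨(jb : ℕ) + 1, by omega⟩ with hjb1
        rcases walk s t a (N + 1) ja jb1 (by simp [hjb1]; omega) (by omega) hRa with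
          ⟨j'', h1, h2, h3⟩ | hR1
        · exact finish j'' (by simp [hjb1] at h1; omega) h3
        · have hlink : eL s t jb = eR s t jb1 := link s t jb jb1 (by simp [hjb1])
          refine ⟨t, jb, ?_, hTb⟩
          rw [hlink]; exact hR1
      · exact finish ja hjj hBa

end CPF


/-- If a part of `λ` is repeated, `λ_i = λ_{i+1} = ⋯ = λ_j`, then in every admissible
state of the colored model the colored lines entering through the top in the
corresponding consecutive columns must pairwise cross: for each pair of colours
`a < b` (so `c_a > c_b`) in the range `[i,j]`, there is a vertex at which the line of
colour `a` enters on the left and the line of colour `b` enters on the top (which is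
exactly the configuration at which two lines cross).  Consequently, if the ensemble
`S_{z,λ,w}` is nonempty then `w` is the shortest element of its coset `w W_λ` in
`W/W_λ`, where `W_λ` is the stabilizer of `λ`. -/
theorem repeated_parts_cross (r N : ℕ) (hr : 0 < r) (lam : Fin r → ℕ)
    (hdom : ∀ i j : Fin r, i ≤ j → lam j ≤ lam i) (hN : lam ⟨0, hr⟩ + r - 1 ≤ N)
    (w : Equiv.Perm (Fin r)) (i j : Fin r) (hij : i ≤ j)
    (hrep : ∀ k : Fin r, i ≤ k → k ≤ j → lam k = lam i) :
    (∀ s : CState r N lam w, ∀ a b : Fin r, i ≤ a → a < b → b ≤ j →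
      ∃ (row : Fin r) (col : Fin (N + 1)),
        s.H row ⟨N - (col : ℕ), by omega⟩ = some a ∧ s.V row.castSucc col = some b) ∧
    (Nonempty (CState r N lam w) →
      ∀ v : Equiv.Perm (Fin r), (∀ k, lam (v k) = lam k) → len r w ≤ len r (w * v)) := by
  have hNc : ∀ c : Fin r, lam c + (r - 1 - (c : ℕ)) ≤ N := by
    intro c
    have h1 := hdom ⟨0, hr⟩ c (Fin.le_def.mpr (by simp only [Fin.val_mk]; omega))
    omega
  constructor
  · intro s a b hia hab hbj
    have hlab : lam a = lam b := by
      rw [hrep a hia (le_of_lt (lt_of_lt_of_le hab hbj)),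
        hrep b (le_trans hia (le_of_lt hab)) hbj]
    have hwab : ((w a : Fin r) : ℕ) < ((w b : Fin r) : ℕ) := by
      refine CPF.chainFin (fun x => ((w x : Fin r) : ℕ)) a b (Fin.lt_def.mp hab) ?_
      intro k hk1 hk2 hk3 hk4
      have hik : i ≤ (⟨k, hk1⟩ : Fin r) := by
        rw [Fin.le_def] at hia ⊢
        simp only [Fin.val_mk]
        omega
      have hik2 : i ≤ (⟨k + 1, hk2⟩ : Fin r) := by
        rw [Fin.le_def] at hia ⊢
        simp only [Fin.val_mk]
        omega
      have hjk : (⟨k, hk1⟩ : Fin r) ≤ j := by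
        rw [Fin.le_def] at hbj ⊢
        rw [Fin.lt_def] at hab
        simp only [Fin.val_mk]
        omega
      have hjk2 : (⟨k + 1, hk2⟩ : Fin r) ≤ j := by
        rw [Fin.le_def] at hbj ⊢
        simp only [Fin.val_mk]
        omega
      have hlamk : lam (⟨k + 1, hk2⟩ : Fin r) = lam ⟨k, hk1⟩ := by
        rw [hrep ⟨k + 1, hk2⟩ hik2 hjk2, hrep ⟨k, hk1⟩ hik hjk]
      exact CPF.exit s (Fin.mk_lt_mk.mpr (by omega)) (CPF.adj s hNc rfl hlamk)
    have hG0 : CPF.Gprop s a b 0 := by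
      refine ⟨by omega, ⟨lam b + (r - 1 - (b : ℕ)), by have := hNc b; omega⟩,
        ⟨lam a + (r - 1 - (a : ℕ)), by have := hNc a; omega⟩, ?_, ?_, ?_⟩
      · simp only [Fin.val_mk]
        rw [Fin.lt_def] at hab
        have := b.isLt
        omega
      · have e : (⟨0, by omega⟩ : Fin (r + 1)) = 0 := rfl
        rw [e]
        exact (s.top a _).mpr rfl
      · have e : (⟨0, by omega⟩ : Fin (r + 1)) = 0 := rfl
        rw [e]
        exact (s.top b _).mpr rfl
    obtain ⟨row, col, h1, h2⟩ := CPF.grec s hab hwab (r + 1) 0 (by omega) hG0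
    exact ⟨row, col, h1, h2⟩
  · rintro ⟨s⟩ v hv
    refine CPF.coset_min lam hdom w ?_ v hv
    intro k hk1 hk2 hlamk
    exact CPF.exit s (Fin.mk_lt_mk.mpr (by omega)) (CPF.adj s hNc rfl hlamk.symm)
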